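/- Let G be the 3-dimensional real Heisenberg group of upper triangular unipotent 3×3 matrices, let p be a prime, and let k be a positive integer. The subgroup Γ generated by the four matrices A₁ = unipotent with (1,2)-entry 1, A₂ = unipotent with (2,3)-entry 1, A₃ = unipotent with (1,2)-entry k√p, and A₄ = unipotent with (2,3)-entry k√p is dense in G. -/

import Mathlib

noncomputable def heis (x y z : ℝ) : (Matrix (Fin 3) (Fin 3) ℝ)ˣ where
  val := !![1, x, z; 0, 1, y; 0, 0, 1]
  inv := !![1, -x, x * y - z; 0, 1, -y; 0, 0, 1]
  val_inv := by
    ext i j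
    fin_cases i <;> fin_cases j <;>
      · simp [Matrix.mul_apply, Fin.sum_univ_succ, Matrix.one_apply]; try ring
  inv_val := by
    ext i j
    fin_cases i <;> fin_cases j <;>
      · simp [Matrix.mul_apply, Fin.sum_univ_succ, Matrix.one_apply]; try ring

lemma heis_mul (x y z x' y' z' : ℝ) :
    heis x y z * heis x' y' z' = heis (x + x') (y + y') (z + z' + x * y') := by
  rw [Units.ext_iff]
  show (!![1, x, z; 0, 1, y; 0, 0, 1] * !![1, x', z'; 0, 1, y'; 0, 0, 1] : Matrix _ _ ℝ) = _
  ext i j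
  fin_cases i <;> fin_cases j <;>
    · simp [heis, Matrix.mul_apply, Fin.sum_univ_succ, Matrix.vecHead, Matrix.vecTail]; try ring

lemma heis_inv (x y z : ℝ) : (heis x y z)⁻¹ = heis (-x) (-y) (x * y - z) := by
  rw [Units.ext_iff]
  show (!![1, -x, x * y - z; 0, 1, -y; 0, 0, 1] : Matrix _ _ ℝ) = _
  ext i j
  fin_cases i <;> fin_cases j <;> simp [heis, Matrix.vecHead, Matrix.vecTail]

lemma heis_one : heis 0 0 0 = 1 := by
  rw [Units.ext_iff]
  show (!![1, (0:ℝ), 0; 0, 1, 0; 0, 0, 1] : Matrix _ _ ℝ) = 1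
  ext i j
  fin_cases i <;> fin_cases j <;> simp [Matrix.one_apply, Matrix.vecHead, Matrix.vecTail]

noncomputable def HeisGroup : Subgroup (Matrix (Fin 3) (Fin 3) ℝ)ˣ where
  carrier := Set.range fun p : ℝ × ℝ × ℝ => heis p.1 p.2.1 p.2.2
  mul_mem' := by
    rintro _ _ ⟨⟨x, y, z⟩, rfl⟩ ⟨⟨x', y', z'⟩, rfl⟩
    exact ⟨(x + x', y + y', z + z' + x * y'), (heis_mul x y z x' y' z').symm⟩
  one_mem' := ⟨(0, 0, 0), heis_one⟩
  inv_mem' := by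
    rintro _ ⟨⟨x, y, z⟩, rfl⟩
    exact ⟨(-x, -y, x * y - z), (heis_inv x y z).symm⟩


noncomputable def hsX (x : ℝ) : HeisGroup := ⟨heis x 0 0, ⟨(x, 0, 0), rfl⟩⟩
noncomputable def hsY (y : ℝ) : HeisGroup := ⟨heis 0 y 0, ⟨(0, y, 0), rfl⟩⟩
noncomputable def hsZ (z : ℝ) : HeisGroup := ⟨heis 0 0 z, ⟨(0, 0, z), rfl⟩⟩

lemma continuous_heis : Continuous (fun q : ℝ × ℝ × ℝ =>
    (⟨heis q.1 q.2.1 q.2.2, ⟨q, rfl⟩⟩ : HeisGroup)) := by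
  apply Continuous.subtype_mk
  rw [Units.continuous_iff]
  constructor
  · apply continuous_matrix
    intro i j
    fin_cases i <;> fin_cases j <;> · simp [heis]; fun_prop
  · apply continuous_matrix
    intro i j
    fin_cases i <;> fin_cases j <;> · simp [heis]; fun_prop

/-- Let `G` be the 3-dimensional real Heisenberg group of upper triangular
unipotent `3×3` matrices, `p` a prime and `k` a positive integer.  The subgroup `Γ`
generated by `A₁ = heis 1 0 0`, `A₂ = heis 0 1 0`, `A₃ = heis (k√p) 0 0` and
`A₄ = heis 0 (k√p) 0` is dense in `G`. -/
theorem heisenberg_lattice_dense (p k : ℕ) (hp : p.Prime) (hk : 0 < k) :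
    Dense ((Subgroup.closure
        {(⟨heis 1 0 0, ⟨(1, 0, 0), rfl⟩⟩ : HeisGroup),
         ⟨heis 0 1 0, ⟨(0, 1, 0), rfl⟩⟩,
         ⟨heis ((k : ℝ) * Real.sqrt p) 0 0, ⟨((k : ℝ) * Real.sqrt p, 0, 0), rfl⟩⟩,
         ⟨heis 0 ((k : ℝ) * Real.sqrt p) 0, ⟨(0, (k : ℝ) * Real.sqrt p, 0), rfl⟩⟩} :
      Subgroup HeisGroup) : Set HeisGroup) := by
  set Γ : Subgroup HeisGroup := Subgroup.closure _ with hΓ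
  set K : Subgroup HeisGroup := Γ.topologicalClosure with hK
  have hKclosed : IsClosed (K : Set HeisGroup) := Subgroup.isClosed_topologicalClosure Γ
  -- density of the additive subgroup generated by 1 and k√p
  have hirr : Irrational ((k : ℝ) * Real.sqrt p) := by
    have := hp.irrational_sqrt
    simpa using this.natCast_mul hk.ne'
  have hdense : Dense ((AddSubgroup.closure {1, (k : ℝ) * Real.sqrt p} : AddSubgroup ℝ) : Set ℝ) := by
    rcases AddSubgroup.dense_or_cyclic (AddSubgroup.closure {1, (k : ℝ) * Real.sqrt p}) with h | ⟨a, ha⟩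
    · exact h
    · exfalso
      have h1 : (1 : ℝ) ∈ AddSubgroup.closure {1, (k : ℝ) * Real.sqrt p} :=
        AddSubgroup.subset_closure (by simp)
      have h2 : (k : ℝ) * Real.sqrt p ∈ AddSubgroup.closure {1, (k : ℝ) * Real.sqrt p} :=
        AddSubgroup.subset_closure (by simp)
      rw [ha, AddSubgroup.mem_closure_singleton] at h1 h2
      obtain ⟨m, hm⟩ := h1
      obtain ⟨n, hn⟩ := h2
      have hm0 : m ≠ 0 := by rintro rfl; simp at hm
      have : Irrational ((n : ℝ) * a) := by rw [← zsmul_eq_mul, hn]; exact hirr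
      apply this.ne_rat ((n : ℚ) / m)
      have : (a : ℝ) = 1 / (m : ℝ) := by
        field_simp
        rw [mul_comm]
        simpa [zsmul_eq_mul] using hm
      rw [this]
      push_cast
      ring
  -- membership of the basic one-parameter images
  have memX : ∀ x : ℝ, hsX x ∈ K := by
    have hXmem : ∀ x ∈ (AddSubgroup.closure {1, (k : ℝ) * Real.sqrt p} : AddSubgroup ℝ),
        hsX x ∈ K := by
      intro x hx
      induction hx using AddSubgroup.closure_induction with
      | mem y hy =>
        rcases hy with rfl | rfl
        · exact Γ.le_topologicalClosure (Subgroup.subset_closure (by left; rfl))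
        · exact Γ.le_topologicalClosure (Subgroup.subset_closure (by right; right; left; rfl))
      | zero =>
        have : hsX 0 = 1 := by
          apply Subtype.ext; simpa [hsX] using heis_one
        rw [this]; exact one_mem K
      | add a b _ _ iha ihb =>
        have : hsX (a + b) = hsX a * hsX b := by
          apply Subtype.ext
          show heis (a + b) 0 0 = heis a 0 0 * heis b 0 0
          rw [heis_mul]; norm_num
        rw [this]; exact mul_mem iha ihb
      | neg a _ iha =>
        have : hsX (-a) = (hsX a)⁻¹ := by
          apply Subtype.ext
          show heis (-a) 0 0 = (heis a 0 0)⁻¹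
          rw [heis_inv]; norm_num
        rw [this]; exact inv_mem iha
    have hcl : IsClosed {x : ℝ | hsX x ∈ K} := by
      have hc : Continuous (fun x : ℝ => hsX x) := by
        unfold hsX
        exact continuous_heis.comp (by fun_prop : Continuous fun x : ℝ => (x, (0:ℝ), (0:ℝ)))
      exact hKclosed.preimage hc
    intro x
    have := closure_minimal (fun y hy => hXmem y hy)
      (s := ((AddSubgroup.closure {1, (k : ℝ) * Real.sqrt p} : AddSubgroup ℝ) : Set ℝ)) hcl
    exact this (by rw [hdense.closure_eq]; trivial)
  have memY : ∀ y : ℝ, hsY y ∈ K := by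
    have hYmem : ∀ y ∈ (AddSubgroup.closure {1, (k : ℝ) * Real.sqrt p} : AddSubgroup ℝ),
        hsY y ∈ K := by
      intro y hy
      induction hy using AddSubgroup.closure_induction with
      | mem a ha =>
        rcases ha with rfl | rfl
        · exact Γ.le_topologicalClosure (Subgroup.subset_closure (by right; left; rfl))
        · exact Γ.le_topologicalClosure (Subgroup.subset_closure (by right; right; right; rfl))
      | zero =>
        have : hsY 0 = 1 := by
          apply Subtype.ext; simpa [hsY] using heis_one
        rw [this]; exact one_mem K
      | add a b _ _ iha ihb =>
        have : hsY (a + b) = hsY a * hsY b := by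
          apply Subtype.ext
          show heis 0 (a + b) 0 = heis 0 a 0 * heis 0 b 0
          rw [heis_mul]; norm_num
        rw [this]; exact mul_mem iha ihb
      | neg a _ iha =>
        have : hsY (-a) = (hsY a)⁻¹ := by
          apply Subtype.ext
          show heis 0 (-a) 0 = (heis 0 a 0)⁻¹
          rw [heis_inv]; norm_num
        rw [this]; exact inv_mem iha
    have hcl : IsClosed {y : ℝ | hsY y ∈ K} := by
      have hc : Continuous (fun y : ℝ => hsY y) := by
        unfold hsY
        exact continuous_heis.comp (by fun_prop : Continuous fun y : ℝ => ((0:ℝ), y, (0:ℝ)))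
      exact hKclosed.preimage hc
    intro y
    have := closure_minimal (fun a ha => hYmem a ha)
      (s := ((AddSubgroup.closure {1, (k : ℝ) * Real.sqrt p} : AddSubgroup ℝ) : Set ℝ)) hcl
    exact this (by rw [hdense.closure_eq]; trivial)
  -- central elements
  have memZ : ∀ z : ℝ, hsZ z ∈ K := by
    intro z
    have hcomm : hsZ z = hsX z * hsY 1 * hsX (-z) * hsY (-1) := by
      apply Subtype.ext
      show heis 0 0 z = heis z 0 0 * heis 0 1 0 * heis (-z) 0 0 * heis 0 (-1) 0
      rw [heis_mul, heis_mul, heis_mul]; norm_num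
    rw [hcomm]
    exact mul_mem (mul_mem (mul_mem (memX z) (memY 1)) (memX (-z))) (memY (-1))
  -- all elements
  have memAll : ∀ g : HeisGroup, g ∈ K := by
    rintro ⟨g, ⟨⟨x, y, z⟩, rfl⟩⟩
    have : (⟨heis x y z, ⟨(x, y, z), rfl⟩⟩ : HeisGroup)
        = hsX x * hsY y * hsZ (z - x * y) := by
      apply Subtype.ext
      show heis x y z = heis x 0 0 * heis 0 y 0 * heis 0 0 (z - x * y)
      rw [heis_mul, heis_mul]; norm_num
    rw [this]
    exact mul_mem (mul_mem (memX x) (memY y)) (memZ (z - x * y))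
  intro g
  rw [mem_closure_iff_nhds]
  intro t ht
  have hg := memAll g
  have : g ∈ closure (Γ : Set HeisGroup) := hg
  rw [mem_closure_iff_nhds] at this
  exact this t ht
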